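/- (Jordan–Hölder) Any two Γ-composition series of a commutative refinement Γ-monoid T are equivalent: there is a bijection between the sets of simple quotient monoids under which corresponding quotients are Γ-isomorphic. -/

import Mathlib

open Pointwise

namespace JH

variable {Γ : Type*} {T : Type*} [AddCommMonoid T]

/-- `x ρ_H y` iff `(x+H) ∩ (y+H) ≠ ∅`. -/
def rho (H : Set T) (x y : T) : Prop := ∃ h₁ ∈ H, ∃ h₂ ∈ H, x + h₁ = y + h₂

/-- The congruence on `T` induced by a submonoid `I`. -/
def subCon (I : AddSubmonoid T) : AddCon T where
  r := rho (I : Set T)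
  iseqv := by
    constructor
    · exact fun x => ⟨0, I.zero_mem, 0, I.zero_mem, rfl⟩
    · rintro x y ⟨h₁, m₁, h₂, m₂, e⟩; exact ⟨h₂, m₂, h₁, m₁, e.symm⟩
    · rintro x y z ⟨h₁, m₁, h₂, m₂, e₁⟩ ⟨k₁, n₁, k₂, n₂, e₂⟩
      refine ⟨h₁ + k₁, I.add_mem m₁ n₁, k₂ + h₂, I.add_mem n₂ m₂, ?_⟩
      calc x + (h₁ + k₁) = (x + h₁) + k₁ := (add_assoc _ _ _).symm
        _ = (y + h₂) + k₁ := by rw [e₁]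
        _ = (y + k₁) + h₂ := add_right_comm _ _ _
        _ = (z + k₂) + h₂ := by rw [e₂]
        _ = z + (k₂ + h₂) := add_assoc _ _ _
  add' := by
    rintro w x y z ⟨h₁, m₁, h₂, m₂, e₁⟩ ⟨k₁, n₁, k₂, n₂, e₂⟩
    refine ⟨h₁ + k₁, I.add_mem m₁ n₁, h₂ + k₂, I.add_mem m₂ n₂, ?_⟩
    calc w + y + (h₁ + k₁) = (w + h₁) + (y + k₁) := add_add_add_comm _ _ _ _
      _ = (x + h₂) + (z + k₂) := by rw [e₁, e₂]
      _ = x + z + (h₂ + k₂) := (add_add_add_comm _ _ _ _).symm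

/-- The quotient monoid `T/I`. -/
abbrev QuotM (I : AddSubmonoid T) : Type _ := (subCon I).Quotient

variable [CommGroup Γ] [DistribMulAction Γ T]

/-- A `Γ`-order-ideal of a `Γ`-monoid: `α•a + β•b ∈ I ↔ a ∈ I ∧ b ∈ I`. -/
def IsOrdIdeal (Γ : Type*) {T : Type*} [CommGroup Γ] [AddCommMonoid T]
    [DistribMulAction Γ T] (I : Set T) : Prop :=
  (0 : T) ∈ I ∧ ∀ (α β : Γ) (a b : T), α • a + β • b ∈ I ↔ a ∈ I ∧ b ∈ I

theorem IsOrdIdeal.add_mem {I : Set T} (h : IsOrdIdeal Γ I) {a b : T}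
    (ha : a ∈ I) (hb : b ∈ I) : a + b ∈ I := by
  have := (h.2 1 1 a b).mpr ⟨ha, hb⟩
  simpa using this

/-- A `Γ`-order-ideal as an additive submonoid. -/
def IsOrdIdeal.asSubmonoid {I : Set T} (h : IsOrdIdeal Γ I) : AddSubmonoid T where
  carrier := I
  zero_mem' := h.1
  add_mem' := fun ha hb => h.add_mem ha hb

theorem IsOrdIdeal.smul_mem {I : Set T} (h : IsOrdIdeal Γ I) (α : Γ) {x : T}
    (hx : x ∈ I) : α • x ∈ I := by
  have := (h.2 α 1 x 0).mpr ⟨hx, h.1⟩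
  simpa using this

/-- The induced scalar action on the quotient. -/
def quotSMulFun {I : Set T} (h : IsOrdIdeal Γ I) (α : Γ) :
    QuotM h.asSubmonoid → QuotM h.asSubmonoid :=
  Quotient.map' (fun x => α • x) (by
    rintro x y ⟨h₁, m₁, h₂, m₂, e⟩
    exact ⟨α • h₁, h.smul_mem α m₁, α • h₂, h.smul_mem α m₂, by
      rw [← smul_add, ← smul_add, e]⟩)

/-- The induced `Γ`-action on the quotient monoid `T/I`. -/
def quotAction {I : Set T} (h : IsOrdIdeal Γ I) :
    DistribMulAction Γ (QuotM h.asSubmonoid) where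
  smul := quotSMulFun h
  one_smul q := by
    refine Quotient.inductionOn' q (fun x => ?_)
    show Quotient.mk'' ((1 : Γ) • x) = Quotient.mk'' x
    rw [one_smul]
  mul_smul α β q := by
    refine Quotient.inductionOn' q (fun x => ?_)
    show Quotient.mk'' ((α * β) • x) = Quotient.mk'' (α • β • x)
    rw [mul_smul]
  smul_zero α := by
    show Quotient.mk'' (α • (0 : T)) = Quotient.mk'' (0 : T)
    rw [smul_zero]
  smul_add α q r := by
    refine Quotient.inductionOn₂' q r (fun x y => ?_)
    show Quotient.mk'' (α • (x + y)) = Quotient.mk'' (α • x + α • y)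
    rw [smul_add]

/-- The `Γ`-action on a `Γ`-order-ideal, viewed as a submonoid. -/
def subtypeAction {J : Set T} (hJ : IsOrdIdeal Γ J) :
    DistribMulAction Γ ↥hJ.asSubmonoid where
  smul α x := ⟨α • (x : T), hJ.smul_mem α x.2⟩
  one_smul x := Subtype.ext (one_smul Γ (x : T))
  mul_smul α β x := Subtype.ext (mul_smul α β (x : T))
  smul_zero α := Subtype.ext (smul_zero α)
  smul_add α x y := Subtype.ext (smul_add α (x : T) (y : T))

/-- The restriction of a set `I` to (the submonoid given by) an ideal `J`. -/
def restrictSet {J : Set T} (hJ : IsOrdIdeal Γ J) (I : Set T) :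
    Set ↥hJ.asSubmonoid := {x | (x : T) ∈ I}

theorem restrict_isOrdIdeal {I J : Set T} (hI : IsOrdIdeal Γ I) (hJ : IsOrdIdeal Γ J) :
    @IsOrdIdeal Γ ↥hJ.asSubmonoid _ _ (subtypeAction hJ) (restrictSet hJ I) := by
  refine ⟨hI.1, fun α β a b => ?_⟩
  exact hI.2 α β (a : T) (b : T)

/-- The quotient `Γ`-monoid `J/I` of two `Γ`-order-ideals. -/
abbrev QuotPair {I J : Set T} (hI : IsOrdIdeal Γ I) (hJ : IsOrdIdeal Γ J) : Type _ :=
  QuotM (@IsOrdIdeal.asSubmonoid Γ _ _ _ (subtypeAction hJ) _ (restrict_isOrdIdeal hI hJ))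

/-- The induced `Γ`-action on `J/I`. -/
def quotPairAction {I J : Set T} (hI : IsOrdIdeal Γ I) (hJ : IsOrdIdeal Γ J) :
    DistribMulAction Γ (QuotPair hI hJ) :=
  letI := subtypeAction hJ
  quotAction (restrict_isOrdIdeal hI hJ)

/-- A simple `Γ`-monoid: nontrivial with no `Γ`-order-ideals except `0` and itself. -/
def IsSimple (Γ : Type*) (M : Type*) [CommGroup Γ] [AddCommMonoid M]
    [DistribMulAction Γ M] : Prop :=
  (∃ x : M, x ≠ 0) ∧ ∀ I : Set M, IsOrdIdeal Γ I → I = {0} ∨ I = Set.univ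

/-- A refinement monoid. -/
def Refinement (T : Type*) [AddCommMonoid T] : Prop :=
  ∀ a b c d : T, a + b = c + d →
    ∃ e₁ e₂ e₃ e₄ : T, a = e₁ + e₂ ∧ b = e₃ + e₄ ∧ c = e₁ + e₃ ∧ d = e₂ + e₄

/-- `Γ`-equivariant monoid isomorphism. -/
def IsGammaIso (Γ : Type*) (M N : Type*) [CommGroup Γ] [AddCommMonoid M]
    [AddCommMonoid N] [DistribMulAction Γ M] [DistribMulAction Γ N] : Prop :=
  ∃ e : M ≃+ N, ∀ (α : Γ) (x : M), e (α • x) = α • (e x)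

/-- A `Γ`-composition series of a `Γ`-monoid. -/
structure CompSeries (Γ : Type*) (M : Type*) [CommGroup Γ] [AddCommMonoid M]
    [DistribMulAction Γ M] where
  n : ℕ
  I : ℕ → Set M
  ideal : ∀ i, i ≤ n → IsOrdIdeal Γ (I i)
  bot : I 0 = {0}
  top : I n = Set.univ
  strict : ∀ i, i < n → I i ⊂ I (i + 1)
  simple : ∀ i (h : i < n),
    @IsSimple Γ (QuotPair (ideal i h.le) (ideal (i + 1) h)) _ _
      (quotPairAction (ideal i h.le) (ideal (i + 1) h))

/-- `Γ`-Noetherian: every ascending chain of `Γ`-order-ideals stabilizes. -/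
def GammaNoetherian (Γ : Type*) (T : Type*) [CommGroup Γ] [AddCommMonoid T]
    [DistribMulAction Γ T] : Prop :=
  ∀ A : ℕ → Set T, (∀ i, IsOrdIdeal Γ (A i)) → (∀ i, A i ⊆ A (i + 1)) →
    ∃ n, ∀ i, n ≤ i → A i = A n

/-- `Γ`-Artinian: every descending chain of `Γ`-order-ideals stabilizes. -/
def GammaArtinian (Γ : Type*) (T : Type*) [CommGroup Γ] [AddCommMonoid T]
    [DistribMulAction Γ T] : Prop :=
  ∀ A : ℕ → Set T, (∀ i, IsOrdIdeal Γ (A i)) → (∀ i, A (i + 1) ⊆ A i) →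
    ∃ n, ∀ i, n ≤ i → A i = A n

/-- Partial sums `I 0 + ⋯ + I (t-1)` of a family of subsets, as submonoids. -/
def sumSeq (I : ℕ → Set T) : ℕ → AddSubmonoid T
  | 0 => ⊥
  | t + 1 => sumSeq I t ⊔ AddSubmonoid.closure (I t)

end JH

namespace JH

variable {Γ : Type*} {T : Type*} [AddCommMonoid T] [CommGroup Γ] [DistribMulAction Γ T]

theorem IsOrdIdeal.mem_left {I : Set T} (h : IsOrdIdeal Γ I) {a b : T}
    (hab : a + b ∈ I) : a ∈ I := by
  have := (h.2 (1:Γ) 1 a b).mp (by simpa using hab)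
  exact this.1

theorem IsOrdIdeal.mem_right {I : Set T} (h : IsOrdIdeal Γ I) {a b : T}
    (hab : a + b ∈ I) : b ∈ I := by
  have := (h.2 (1:Γ) 1 a b).mp (by simpa using hab)
  exact this.2

theorem IsOrdIdeal.smul_mem_iff {I : Set T} (h : IsOrdIdeal Γ I) (α : Γ) {x : T} :
    α • x ∈ I ↔ x ∈ I := by
  constructor
  · intro hx
    have : α • x + (1:Γ) • 0 ∈ I := by simpa [h.1] using hx
    exact ((h.2 α 1 x 0).mp this).1
  · exact h.smul_mem α

theorem inter_isOrdIdeal {I J : Set T} (hI : IsOrdIdeal Γ I) (hJ : IsOrdIdeal Γ J) :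
    IsOrdIdeal Γ (I ∩ J) := by
  refine ⟨⟨hI.1, hJ.1⟩, fun α β a b => ?_⟩
  have h1 := hI.2 α β a b
  have h2 := hJ.2 α β a b
  constructor
  · rintro ⟨m1, m2⟩
    exact ⟨⟨(h1.mp m1).1, (h2.mp m2).1⟩, ⟨(h1.mp m1).2, (h2.mp m2).2⟩⟩
  · rintro ⟨⟨a1, a2⟩, ⟨b1, b2⟩⟩
    exact ⟨h1.mpr ⟨a1, b1⟩, h2.mpr ⟨a2, b2⟩⟩

/-- The sum of two sets. -/
def sumSet (I J : Set T) : Set T := {x | ∃ i ∈ I, ∃ j ∈ J, x = i + j}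

theorem left_subset_sumSet {I J : Set T} (hJ : IsOrdIdeal Γ J) : I ⊆ sumSet I J :=
  fun x hx => ⟨x, hx, 0, hJ.1, (add_zero x).symm⟩

theorem right_subset_sumSet {I J : Set T} (hI : IsOrdIdeal Γ I) : J ⊆ sumSet I J :=
  fun x hx => ⟨0, hI.1, x, hx, (zero_add x).symm⟩

theorem sumSet_subset {I J P : Set T} (hP : IsOrdIdeal Γ P) (h1 : I ⊆ P) (h2 : J ⊆ P) :
    sumSet I J ⊆ P := by
  rintro x ⟨i, hi, j, hj, rfl⟩
  exact hP.add_mem (h1 hi) (h2 hj)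

theorem sumSet_isOrdIdeal (hT : Refinement T) {I J : Set T}
    (hI : IsOrdIdeal Γ I) (hJ : IsOrdIdeal Γ J) : IsOrdIdeal Γ (sumSet I J) := by
  have mem_of : ∀ x : T, x ∈ sumSet I J → ∀ α : Γ, α • x ∈ sumSet I J := by
    rintro x ⟨i, hi, j, hj, rfl⟩ α
    exact ⟨α • i, hI.smul_mem α hi, α • j, hJ.smul_mem α hj, (smul_add α i j)⟩
  refine ⟨⟨0, hI.1, 0, hJ.1, (add_zero 0).symm⟩, fun α β a b => ?_⟩
  constructor
  · rintro ⟨i, hi, j, hj, hsum⟩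
    have key : ∀ c : T, ∀ γ : Γ, ∀ d : T, γ • c + d = i + j → c ∈ sumSet I J := by
      intro c γ d hcd
      obtain ⟨e1, e2, e3, e4, hc, hd, hi', hj'⟩ := hT (γ • c) d i j hcd
      have he1 : e1 ∈ I := hI.mem_left (hi' ▸ hi)
      have he3 : e3 ∈ I := hI.mem_right (hi' ▸ hi)
      have he2 : e2 ∈ J := hJ.mem_left (hj' ▸ hj)
      have he4 : e4 ∈ J := hJ.mem_right (hj' ▸ hj)
      have : γ • c ∈ sumSet I J := ⟨e1, he1, e2, he2, hc⟩
      have := mem_of _ this γ⁻¹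
      simpa using this
    constructor
    · exact key a α (β • b) hsum
    · exact key b β (α • a) (by rw [add_comm] at hsum; exact hsum)
  · rintro ⟨⟨i1, hi1, j1, hj1, ha⟩, ⟨i2, hi2, j2, hj2, hb⟩⟩
    refine ⟨α • i1 + β • i2, hI.add_mem (hI.smul_mem _ hi1) (hI.smul_mem _ hi2),
      α • j1 + β • j2, hJ.add_mem (hJ.smul_mem _ hj1) (hJ.smul_mem _ hj2), ?_⟩
    rw [ha, hb, smul_add, smul_add]
    exact add_add_add_comm _ _ _ _

end JH
namespace JH

variable {Γ : Type*} {T : Type*} [AddCommMonoid T] [CommGroup Γ] [DistribMulAction Γ T]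

/-- Class of `x` in `J/I`. -/
def mkq {I J : Set T} (hI : IsOrdIdeal Γ I) (hJ : IsOrdIdeal Γ J) (x : T) (hx : x ∈ J) :
    QuotPair hI hJ := Quotient.mk'' ⟨x, hx⟩

theorem mkq_surjective {I J : Set T} (hI : IsOrdIdeal Γ I) (hJ : IsOrdIdeal Γ J)
    (q : QuotPair hI hJ) : ∃ x, ∃ hx : x ∈ J, q = mkq hI hJ x hx := by
  refine Quotient.inductionOn' q ?_
  rintro ⟨x, hx⟩
  exact ⟨x, hx, rfl⟩

theorem mkq_eq_mkq {I J : Set T} (hI : IsOrdIdeal Γ I) (hJ : IsOrdIdeal Γ J)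
    {x y : T} (hx : x ∈ J) (hy : y ∈ J) :
    mkq hI hJ x hx = mkq hI hJ y hy ↔
      ∃ h₁, h₁ ∈ I ∧ h₁ ∈ J ∧ ∃ h₂, h₂ ∈ I ∧ h₂ ∈ J ∧ x + h₁ = y + h₂ := by
  refine Quotient.eq''.trans ?_
  show rho _ _ _ ↔ _
  constructor
  · rintro ⟨⟨h₁, hm₁⟩, hi₁, ⟨h₂, hm₂⟩, hi₂, e⟩
    refine ⟨h₁, hi₁, hm₁, h₂, hi₂, hm₂, ?_⟩
    exact congrArg Subtype.val e
  · rintro ⟨h₁, hi₁, hm₁, h₂, hi₂, hm₂, e⟩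
    exact ⟨⟨h₁, hm₁⟩, hi₁, ⟨h₂, hm₂⟩, hi₂, Subtype.ext e⟩

theorem mkq_add {I J : Set T} (hI : IsOrdIdeal Γ I) (hJ : IsOrdIdeal Γ J)
    {x y : T} (hx : x ∈ J) (hy : y ∈ J) :
    mkq hI hJ x hx + mkq hI hJ y hy = mkq hI hJ (x + y) (hJ.add_mem hx hy) := rfl

theorem mkq_zero {I J : Set T} (hI : IsOrdIdeal Γ I) (hJ : IsOrdIdeal Γ J) :
    (0 : QuotPair hI hJ) = mkq hI hJ 0 hJ.1 := rfl

theorem mkq_smul {I J : Set T} (hI : IsOrdIdeal Γ I) (hJ : IsOrdIdeal Γ J)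
    (α : Γ) {x : T} (hx : x ∈ J) :
    (letI := quotPairAction hI hJ; α • mkq hI hJ x hx) = mkq hI hJ (α • x) (hJ.smul_mem α hx) := rfl

/-- `Γ`-isomorphism between two quotient pairs. -/
def QPIso {I J I' J' : Set T} (hI : IsOrdIdeal Γ I) (hJ : IsOrdIdeal Γ J)
    (hI' : IsOrdIdeal Γ I') (hJ' : IsOrdIdeal Γ J') : Prop :=
  @IsGammaIso Γ (QuotPair hI hJ) (QuotPair hI' hJ') _ _ _
    (quotPairAction hI hJ) (quotPairAction hI' hJ')

theorem QPIso.refl {I J : Set T} (hI : IsOrdIdeal Γ I) (hJ : IsOrdIdeal Γ J) :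
    QPIso hI hJ hI hJ := ⟨AddEquiv.refl _, fun _ _ => rfl⟩

theorem gammaIso_symm {M N : Type*} [AddCommMonoid M] [AddCommMonoid N]
    {sM : DistribMulAction Γ M} {sN : DistribMulAction Γ N}
    (h : @IsGammaIso Γ M N _ _ _ sM sN) : @IsGammaIso Γ N M _ _ _ sN sM := by
  obtain ⟨e, he⟩ := h
  refine ⟨e.symm, fun α y => ?_⟩
  apply e.injective
  rw [e.apply_symm_apply, he, e.apply_symm_apply]

theorem gammaIso_trans {M N P : Type*} [AddCommMonoid M] [AddCommMonoid N] [AddCommMonoid P]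
    {sM : DistribMulAction Γ M} {sN : DistribMulAction Γ N} {sP : DistribMulAction Γ P}
    (h1 : @IsGammaIso Γ M N _ _ _ sM sN) (h2 : @IsGammaIso Γ N P _ _ _ sN sP) :
    @IsGammaIso Γ M P _ _ _ sM sP := by
  obtain ⟨e1, he1⟩ := h1
  obtain ⟨e2, he2⟩ := h2
  exact ⟨e1.trans e2, fun α x => by simp [AddEquiv.trans_apply, he1, he2]⟩

theorem QPIso.symm {I J I' J' : Set T} {hI : IsOrdIdeal Γ I} {hJ : IsOrdIdeal Γ J}
    {hI' : IsOrdIdeal Γ I'} {hJ' : IsOrdIdeal Γ J'}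
    (h : QPIso hI hJ hI' hJ') : QPIso hI' hJ' hI hJ := gammaIso_symm h

theorem QPIso.trans {I J I' J' I'' J'' : Set T} {hI : IsOrdIdeal Γ I} {hJ : IsOrdIdeal Γ J}
    {hI' : IsOrdIdeal Γ I'} {hJ' : IsOrdIdeal Γ J'}
    {hI'' : IsOrdIdeal Γ I''} {hJ'' : IsOrdIdeal Γ J''}
    (h1 : QPIso hI hJ hI' hJ') (h2 : QPIso hI' hJ' hI'' hJ'') : QPIso hI hJ hI'' hJ'' :=
  gammaIso_trans h1 h2

theorem QPIso.congr {I J I' J' : Set T} (hI : IsOrdIdeal Γ I) (hJ : IsOrdIdeal Γ J)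
    (hI' : IsOrdIdeal Γ I') (hJ' : IsOrdIdeal Γ J') (eI : I = I') (eJ : J = J') :
    QPIso hI hJ hI' hJ' := by
  subst eI; subst eJ; exact QPIso.refl hI hJ

/-- Transfer of simplicity along a `Γ`-isomorphism. -/
theorem gammaIso_simple {M N : Type*} [AddCommMonoid M] [AddCommMonoid N]
    {sM : DistribMulAction Γ M} {sN : DistribMulAction Γ N}
    (h : @IsGammaIso Γ M N _ _ _ sM sN) (hs : @IsSimple Γ M _ _ sM) :
    @IsSimple Γ N _ _ sN := by
  obtain ⟨e, he⟩ := h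
  obtain ⟨⟨x, hx⟩, hid⟩ := hs
  constructor
  · exact ⟨e x, fun h0 => hx (by simpa using e.injective (by simpa using h0))⟩
  · intro K hK
    have hpre : @IsOrdIdeal Γ M _ _ sM (e ⁻¹' K) := by
      refine ⟨by simpa using hK.1, fun α β a b => ?_⟩
      have : e (α • a + β • b) = α • e a + β • e b := by rw [map_add, he, he]
      simpa [Set.mem_preimage, this] using hK.2 α β (e a) (e b)
    rcases hid _ hpre with h0 | hu
    · left
      ext y
      simp only [Set.mem_singleton_iff]
      constructor
      · intro hy
        have : e.symm y ∈ e ⁻¹' K := by simp [Set.mem_preimage, e.apply_symm_apply, hy]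
        rw [h0] at this
        simp only [Set.mem_singleton_iff] at this
        have := congrArg e this
        simpa using this
      · rintro rfl; simpa using hK.1
    · right
      ext y
      simp only [Set.mem_univ, iff_true]
      have : e.symm y ∈ e ⁻¹' K := by rw [hu]; trivial
      simpa using this

end JH
namespace JH

variable {Γ : Type*} {T : Type*} [AddCommMonoid T] [CommGroup Γ] [DistribMulAction Γ T]

/-- If two ideals cut out the same relation on `J`, the quotients are `Γ`-isomorphic. -/
theorem QPIso.of_rel {I I' J : Set T} (hI : IsOrdIdeal Γ I) (hI' : IsOrdIdeal Γ I')
    (hJ : IsOrdIdeal Γ J) (h : ∀ x ∈ J, (x ∈ I ↔ x ∈ I')) : QPIso hI hJ hI' hJ := by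
  letI := subtypeAction hJ
  have himp : ∀ {A B : Set T} (hA : IsOrdIdeal Γ A) (hB : IsOrdIdeal Γ B)
      (_ : ∀ x ∈ J, x ∈ A → x ∈ B),
      Relator.LiftFun (subCon (restrict_isOrdIdeal hA hJ).asSubmonoid).toSetoid
        (subCon (restrict_isOrdIdeal hB hJ).asSubmonoid).toSetoid id id := by
    intro A B hA hB hAB x y hxy
    obtain ⟨h₁, m₁, h₂, m₂, e⟩ := hxy
    exact ⟨h₁, hAB _ h₁.2 m₁, h₂, hAB _ h₂.2 m₂, e⟩
  refine ⟨{ toFun := Quotient.map' id (himp hI hI' fun x hx => (h x hx).mp),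
            invFun := Quotient.map' id (himp hI' hI fun x hx => (h x hx).mpr),
            left_inv := fun q => Quotient.inductionOn' q fun a => rfl,
            right_inv := fun q => Quotient.inductionOn' q fun a => rfl,
            map_add' := fun q r => Quotient.inductionOn₂' q r fun a b => rfl }, ?_⟩
  intro α q
  exact Quotient.inductionOn' q fun a => rfl

/-- Second isomorphism theorem: `J/(I∩J) ≅ (I+J)/I`. -/
theorem second_iso (hT : Refinement T) {I J : Set T}
    (hI : IsOrdIdeal Γ I) (hJ : IsOrdIdeal Γ J) :
    QPIso hI hJ hI (sumSet_isOrdIdeal hT hI hJ) := by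
  classical
  set hS := sumSet_isOrdIdeal (Γ := Γ) hT hI hJ with hSdef
  let g : QuotPair hI hJ → QuotPair hI hS :=
    Quotient.map' (fun x => ⟨(x : T), right_subset_sumSet hI x.2⟩) (by
      rintro x y ⟨h₁, m₁, h₂, m₂, e⟩
      exact ⟨⟨(h₁ : T), right_subset_sumSet hI h₁.2⟩, m₁,
        ⟨(h₂ : T), right_subset_sumSet hI h₂.2⟩, m₂,
        Subtype.ext (show (x : T) + (h₁ : T) = (y : T) + (h₂ : T) from
          congrArg Subtype.val e)⟩)
  have hg_mk : ∀ (x : T) (hx : x ∈ J),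
      g (mkq hI hJ x hx) = mkq hI hS x (right_subset_sumSet hI hx) := fun _ _ => rfl
  have ginj : Function.Injective g := by
    intro q q'
    obtain ⟨x, hx, rfl⟩ := mkq_surjective _ _ q
    obtain ⟨y, hy, rfl⟩ := mkq_surjective _ _ q'
    rw [hg_mk, hg_mk, mkq_eq_mkq, mkq_eq_mkq]
    rintro ⟨h₁, hi₁, _, h₂, hi₂, _, e⟩
    obtain ⟨e1, e2, e3, e4, hx', hh1, hy', hh2⟩ := hT x h₁ y h₂ e
    have he1J : e1 ∈ J := hJ.mem_left (hx' ▸ hx)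
    have he2J : e2 ∈ J := hJ.mem_right (hx' ▸ hx)
    have he3J : e3 ∈ J := hJ.mem_right (hy' ▸ hy)
    have he3I : e3 ∈ I := hI.mem_left (hh1 ▸ hi₁)
    have he2I : e2 ∈ I := hI.mem_left (hh2 ▸ hi₂)
    refine ⟨e3, he3I, he3J, e2, he2I, he2J, ?_⟩
    rw [hx', hy', add_assoc, add_assoc, add_comm e2 e3]
  have gsurj : Function.Surjective g := by
    intro q
    obtain ⟨z, hz, rfl⟩ := mkq_surjective _ _ q
    obtain ⟨i, hi, j, hj, rfl⟩ := hz
    refine ⟨mkq hI hJ j hj, ?_⟩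
    rw [hg_mk]
    refine (mkq_eq_mkq _ _ _ _).mpr ?_
    exact ⟨i, hi, left_subset_sumSet hJ hi, 0, hI.1, hS.1, by
      rw [add_zero, add_comm]⟩
  refine ⟨{ Equiv.ofBijective g ⟨ginj, gsurj⟩ with
            map_add' := fun q r => Quotient.inductionOn₂' q r fun a b => rfl }, ?_⟩
  intro α q
  exact Quotient.inductionOn' q fun a => rfl

/-- Correspondence: ideals between `K` and `P` are trivial when `P/K` is simple. -/
theorem correspondence {K P L : Set T} (hK : IsOrdIdeal Γ K) (hP : IsOrdIdeal Γ P)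
    (hs : @IsSimple Γ (QuotPair hK hP) _ _ (quotPairAction hK hP))
    (hL : IsOrdIdeal Γ L) (h1 : K ⊆ L) (h2 : L ⊆ P) : L = K ∨ L = P := by
  classical
  letI := quotPairAction hK hP
  set Ibar : Set (QuotPair hK hP) :=
    {q | ∃ x, ∃ hx : x ∈ P, x ∈ L ∧ q = mkq hK hP x hx} with hIbardef
  have hIbar : IsOrdIdeal Γ Ibar := by
    refine ⟨⟨0, hP.1, hL.1, mkq_zero hK hP⟩, fun α β q r => ?_⟩
    obtain ⟨a, ha, rfl⟩ := mkq_surjective _ _ q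
    obtain ⟨b, hb, rfl⟩ := mkq_surjective _ _ r
    constructor
    · rintro ⟨y, hyP, hyL, heq⟩
      rw [mkq_smul, mkq_smul, mkq_add, mkq_eq_mkq] at heq
      obtain ⟨h₁, hk₁, _, h₂, hk₂, _, e⟩ := heq
      have hmem : α • a + β • b + h₁ ∈ L := by
        rw [e]; exact hL.add_mem hyL (h1 hk₂)
      have : α • a + β • b ∈ L := hL.mem_left hmem
      obtain ⟨haL, hbL⟩ := (hL.2 α β a b).mp this
      exact ⟨⟨a, ha, haL, rfl⟩, ⟨b, hb, hbL, rfl⟩⟩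
    · rintro ⟨⟨x, hxP, hxL, hx⟩, ⟨y, hyP, hyL, hy⟩⟩
      refine ⟨α • x + β • y, hP.add_mem (hP.smul_mem _ hxP) (hP.smul_mem _ hyP),
        (hL.2 α β x y).mpr ⟨hxL, hyL⟩, ?_⟩
      rw [hx, hy, mkq_smul, mkq_smul, mkq_add]
  rcases hs.2 Ibar hIbar with h0 | hu
  · left
    refine Set.Subset.antisymm (fun x hx => ?_) h1
    have hmem : mkq hK hP x (h2 hx) ∈ Ibar := ⟨x, h2 hx, hx, rfl⟩
    rw [h0, Set.mem_singleton_iff, mkq_zero, mkq_eq_mkq] at hmem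
    obtain ⟨h₁, hk₁, _, h₂, hk₂, _, e⟩ := hmem
    rw [zero_add] at e
    exact hK.mem_left (e ▸ hk₂)
  · right
    refine Set.Subset.antisymm h2 (fun x hx => ?_)
    have hmem : mkq hK hP x hx ∈ Ibar := by rw [hu]; trivial
    obtain ⟨y, hyP, hyL, heq⟩ := hmem
    rw [mkq_eq_mkq] at heq
    obtain ⟨h₁, hk₁, _, h₂, hk₂, _, e⟩ := heq
    have : x + h₁ ∈ L := by rw [e]; exact hL.add_mem hyL (h1 hk₂)
    exact hL.mem_left this

/-- A simple quotient `P/K` is nontrivial: `P ⊄ K`. -/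
theorem exists_not_mem_of_simple {K P : Set T} (hK : IsOrdIdeal Γ K) (hP : IsOrdIdeal Γ P)
    (hs : @IsSimple Γ (QuotPair hK hP) _ _ (quotPairAction hK hP)) :
    ∃ x ∈ P, x ∉ K := by
  obtain ⟨q, hq⟩ := hs.1
  obtain ⟨x, hx, rfl⟩ := mkq_surjective _ _ q
  refine ⟨x, hx, fun hxK => hq ?_⟩
  rw [mkq_zero, mkq_eq_mkq]
  exact ⟨0, hK.1, hP.1, x, hxK, hx, by rw [add_zero, zero_add]⟩

end JH
namespace JH

variable {Γ : Type*} {T : Type*} [AddCommMonoid T] [CommGroup Γ] [DistribMulAction Γ T]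

theorem simple_congr {I J I' J' : Set T} {hI : IsOrdIdeal Γ I} {hJ : IsOrdIdeal Γ J}
    {hI' : IsOrdIdeal Γ I'} {hJ' : IsOrdIdeal Γ J'} (eI : I = I') (eJ : J = J')
    (h : @IsSimple Γ (QuotPair hI hJ) _ _ (quotPairAction hI hJ)) :
    @IsSimple Γ (QuotPair hI' hJ') _ _ (quotPairAction hI' hJ') := by
  subst eI; subst eJ; exact h

/-- A composition series (with constant continuation above `n`). -/
structure Ser (Γ : Type*) (T : Type*) [CommGroup Γ] [AddCommMonoid T]
    [DistribMulAction Γ T] where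
  n : ℕ
  I : ℕ → Set T
  ideal : ∀ i, IsOrdIdeal Γ (I i)
  bot : I 0 = {0}
  const : ∀ i, n ≤ i → I i = I n
  mono : ∀ i, I i ⊆ I (i + 1)
  strict : ∀ i, i < n → I i ≠ I (i + 1)
  simple : ∀ i, i < n → @IsSimple Γ (QuotPair (ideal i) (ideal (i + 1))) _ _
    (quotPairAction (ideal i) (ideal (i + 1)))

theorem Ser.mono_le (S : Ser Γ T) {i j : ℕ} (h : i ≤ j) : S.I i ⊆ S.I j := by
  induction j, h using Nat.le_induction with
  | base => exact le_refl _
  | succ j hij ih => exact ih.trans (S.mono j)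

theorem Ser.subset_top (S : Ser Γ T) (i : ℕ) : S.I i ⊆ S.I S.n := by
  rcases le_or_gt i S.n with h | h
  · exact S.mono_le h
  · rw [S.const i h.le]

/-- Equivalence of two series. -/
def SerEquiv (S S' : Ser Γ T) : Prop :=
  ∃ σ : Fin S.n ≃ Fin S'.n, ∀ i : Fin S.n,
    QPIso (S.ideal i) (S.ideal (i + 1)) (S'.ideal (σ i)) (S'.ideal (σ i + 1))

theorem SerEquiv.refl (S : Ser Γ T) : SerEquiv S S :=
  ⟨Equiv.refl _, fun i => QPIso.refl _ _⟩

theorem SerEquiv.symm {S S' : Ser Γ T} (h : SerEquiv S S') : SerEquiv S' S := by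
  obtain ⟨σ, hσ⟩ := h
  refine ⟨σ.symm, fun i => ?_⟩
  refine (QPIso.congr _ _ (S'.ideal (σ (σ.symm i))) (S'.ideal ((σ (σ.symm i) : ℕ) + 1))
    ?_ ?_).trans (hσ (σ.symm i)).symm
  · rw [Equiv.apply_symm_apply]
  · rw [Equiv.apply_symm_apply]

theorem SerEquiv.trans {S S' S'' : Ser Γ T} (h1 : SerEquiv S S') (h2 : SerEquiv S' S'') :
    SerEquiv S S'' := by
  obtain ⟨σ1, hσ1⟩ := h1
  obtain ⟨σ2, hσ2⟩ := h2
  exact ⟨σ1.trans σ2, fun i => (hσ1 i).trans (hσ2 (σ1 i))⟩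

theorem SerEquiv.length_eq {S S' : Ser Γ T} (h : SerEquiv S S') : S.n = S'.n :=
  Fin.equiv_iff_eq.mp ⟨h.choose⟩

/-- Truncation of a series at level `t`. -/
def Ser.truncate (S : Ser Γ T) (t : ℕ) (ht : t ≤ S.n) : Ser Γ T where
  n := t
  I i := S.I (min i t)
  ideal i := S.ideal _
  bot := by simpa using S.bot
  const i hi := by beta_reduce; rw [min_eq_right hi, min_self]
  mono i := S.mono_le (by omega)
  strict i hi := by
    beta_reduce
    rw [min_eq_left hi.le, min_eq_left (by omega)]
    exact S.strict i (lt_of_lt_of_le hi ht)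
  simple i hi := by
    refine simple_congr ?_ ?_ (S.simple i (lt_of_lt_of_le hi ht))
    · beta_reduce; rw [min_eq_left hi.le]
    · beta_reduce; rw [min_eq_left (by omega : i + 1 ≤ t)]

theorem Ser.truncate_top (S : Ser Γ T) (t : ℕ) (ht : t ≤ S.n) :
    (S.truncate t ht).I (S.truncate t ht).n = S.I t := by
  show S.I (min t t) = S.I t
  rw [min_self]

theorem Ser.truncate_quot (S : Ser Γ T) (t : ℕ) (ht : t ≤ S.n) (i : ℕ) (hi : i < t) :
    QPIso ((S.truncate t ht).ideal i) ((S.truncate t ht).ideal (i + 1))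
      (S.ideal i) (S.ideal (i + 1)) := by
  refine QPIso.congr _ _ _ _ ?_ ?_
  · show S.I (min i t) = S.I i
    rw [min_eq_left hi.le]
  · show S.I (min (i + 1) t) = S.I (i + 1)
    rw [min_eq_left (by omega : i + 1 ≤ t)]

/-- Appending a new top to a series. -/
def Ser.snoc (S : Ser Γ T) (P' : Set T) (hP' : IsOrdIdeal Γ P')
    (hsub : S.I S.n ⊆ P') (hne : S.I S.n ≠ P')
    (hsim : @IsSimple Γ (QuotPair (S.ideal S.n) hP') _ _
      (quotPairAction (S.ideal S.n) hP')) : Ser Γ T where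
  n := S.n + 1
  I i := if i ≤ S.n then S.I i else P'
  ideal i := by beta_reduce; split_ifs with h; exacts [S.ideal i, hP']
  bot := by beta_reduce; rw [if_pos (Nat.zero_le S.n)]; exact S.bot
  const i hi := by beta_reduce; rw [if_neg (by omega : ¬ i ≤ S.n), if_neg (by omega : ¬ S.n + 1 ≤ S.n)]
  mono i := by
    beta_reduce
    rcases lt_trichotomy i S.n with h | h | h
    · rw [if_pos h.le, if_pos (by omega : i + 1 ≤ S.n)]; exact S.mono i
    · subst h; rw [if_pos le_rfl, if_neg (by omega : ¬ S.n + 1 ≤ S.n)]; exact hsub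
    · rw [if_neg (by omega : ¬ i ≤ S.n), if_neg (by omega : ¬ i + 1 ≤ S.n)]
  strict i hi := by
    beta_reduce
    rcases lt_or_eq_of_le (Nat.lt_succ_iff.mp hi) with h | h
    · rw [if_pos h.le, if_pos (by omega : i + 1 ≤ S.n)]; exact S.strict i h
    · subst h; rw [if_pos le_rfl, if_neg (by omega : ¬ S.n + 1 ≤ S.n)]; exact hne
  simple i hi := by
    rcases lt_or_eq_of_le (Nat.lt_succ_iff.mp hi) with h | h
    · refine simple_congr ?_ ?_ (S.simple i h)
      · beta_reduce; rw [if_pos h.le]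
      · beta_reduce; rw [if_pos (by omega : i + 1 ≤ S.n)]
    · subst h
      refine simple_congr ?_ ?_ hsim
      · beta_reduce; rw [if_pos le_rfl]
      · beta_reduce; rw [if_neg (by omega : ¬ S.n + 1 ≤ S.n)]

theorem Ser.snoc_n (S : Ser Γ T) (P' : Set T) (hP' : IsOrdIdeal Γ P')
    (hsub : S.I S.n ⊆ P') (hne : S.I S.n ≠ P') (hsim) :
    (S.snoc P' hP' hsub hne hsim).n = S.n + 1 := rfl

theorem Ser.snoc_top (S : Ser Γ T) (P' : Set T) (hP' : IsOrdIdeal Γ P')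
    (hsub : S.I S.n ⊆ P') (hne : S.I S.n ≠ P') (hsim) :
    (S.snoc P' hP' hsub hne hsim).I (S.snoc P' hP' hsub hne hsim).n = P' := by
  show (if S.n + 1 ≤ S.n then S.I (S.n + 1) else P') = P'
  rw [if_neg (by omega)]

theorem Ser.snoc_quot_lt (S : Ser Γ T) (P' : Set T) (hP' : IsOrdIdeal Γ P')
    (hsub : S.I S.n ⊆ P') (hne : S.I S.n ≠ P') (hsim) (i : ℕ) (hi : i < S.n) :
    QPIso ((S.snoc P' hP' hsub hne hsim).ideal i) ((S.snoc P' hP' hsub hne hsim).ideal (i + 1))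
      (S.ideal i) (S.ideal (i + 1)) := by
  refine QPIso.congr _ _ _ _ ?_ ?_
  · show (if i ≤ S.n then S.I i else P') = S.I i
    rw [if_pos hi.le]
  · show (if i + 1 ≤ S.n then S.I (i + 1) else P') = S.I (i + 1)
    rw [if_pos (by omega)]

theorem Ser.snoc_quot_last (S : Ser Γ T) (P' : Set T) (hP' : IsOrdIdeal Γ P')
    (hsub : S.I S.n ⊆ P') (hne : S.I S.n ≠ P') (hsim) :
    QPIso ((S.snoc P' hP' hsub hne hsim).ideal S.n)
      ((S.snoc P' hP' hsub hne hsim).ideal (S.n + 1))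
      (S.ideal S.n) hP' := by
  refine QPIso.congr _ _ _ _ ?_ ?_
  · show (if S.n ≤ S.n then S.I S.n else P') = S.I S.n
    rw [if_pos le_rfl]
  · show (if S.n + 1 ≤ S.n then S.I (S.n + 1) else P') = P'
    rw [if_neg (by omega)]

end JH
namespace JH

variable {Γ : Type*} {T : Type*} [AddCommMonoid T] [CommGroup Γ] [DistribMulAction Γ T]

/-- The trivial series. -/
def Ser.triv {M : Set T} (hM : IsOrdIdeal Γ M) (hM0 : M = {0}) : Ser Γ T where
  n := 0
  I _ := M
  ideal _ := hM
  bot := hM0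
  const _ _ := rfl
  mono _ := subset_rfl
  strict i hi := absurd hi (Nat.not_lt_zero i)
  simple i hi := absurd hi (Nat.not_lt_zero i)

/-- Every ideal contained in the top of a series has a composition series. -/
theorem exists_ser_of_subset (hT : Refinement T) :
    ∀ k (S : Ser Γ T), S.n = k → ∀ (M : Set T) (hM : IsOrdIdeal Γ M),
      M ⊆ S.I S.n → ∃ R : Ser Γ T, R.I R.n = M := by
  intro k
  induction k with
  | zero =>
    intro S hk M hM hMs
    have hM0 : M = {0} := by
      apply Set.Subset.antisymm
      · rw [hk, S.bot] at hMs; exact hMs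
      · rintro x rfl
        simpa using hM.1
    exact ⟨Ser.triv hM hM0, rfl⟩
  | succ k ih =>
    intro S hk M hM hMs
    rw [hk] at hMs
    have hkn : k ≤ S.n := by omega
    have hkltn : k < S.n := by omega
    by_cases hMQ : M ⊆ S.I k
    · obtain ⟨R, hR⟩ := ih (S.truncate k hkn) rfl M hM (by rw [S.truncate_top]; exact hMQ)
      exact ⟨R, hR⟩
    · have hMk : M ⊆ S.I (k + 1) := by
        exact hMs
      obtain ⟨R, hR⟩ := ih (S.truncate k hkn) rfl (M ∩ S.I k)
        (inter_isOrdIdeal hM (S.ideal k))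
        (by rw [S.truncate_top]; exact Set.inter_subset_right)
      have hsum_sub : sumSet (S.I k) M ⊆ S.I (k + 1) :=
        sumSet_subset (S.ideal (k + 1)) (S.mono k) hMk
      have hQsub : S.I k ⊆ sumSet (S.I k) M := left_subset_sumSet hM
      have hsimple := S.simple k hkltn
      rcases correspondence (S.ideal k) (S.ideal (k + 1)) hsimple
          (sumSet_isOrdIdeal hT (S.ideal k) hM) hQsub hsum_sub with he | he
      · exact absurd ((right_subset_sumSet (S.ideal k)).trans he.subset) hMQ
      · have hMM' : M ∩ S.I k ≠ M := by
          intro h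
          refine hMQ (fun x hx => ?_)
          rw [← h] at hx
          exact hx.2
        have hsub' : R.I R.n ⊆ M := hR ▸ Set.inter_subset_left
        have hne' : R.I R.n ≠ M := hR ▸ hMM'
        have chain : QPIso (R.ideal R.n) hM (S.ideal k) (S.ideal (k + 1)) := by
          refine ((QPIso.congr (R.ideal R.n) hM (inter_isOrdIdeal hM (S.ideal k)) hM
            hR rfl).trans ?_)
          refine (QPIso.of_rel (inter_isOrdIdeal hM (S.ideal k)) (S.ideal k) hM
            (fun x hx => ?_)).trans ?_
          · exact ⟨fun h => h.2, fun h => ⟨hx, h⟩⟩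
          · exact (second_iso hT (S.ideal k) hM).trans
              (QPIso.congr _ _ _ _ rfl he)
        have hsim : @IsSimple Γ (QuotPair (R.ideal R.n) hM) _ _
            (quotPairAction (R.ideal R.n) hM) :=
          gammaIso_simple (QPIso.symm chain) hsimple
        exact ⟨R.snoc M hM hsub' hne' hsim, by rw [R.snoc_top]⟩

end JH
namespace JH

variable {Γ : Type*} {T : Type*} [AddCommMonoid T] [CommGroup Γ] [DistribMulAction Γ T]

theorem QPIso.reindex {S S' : Ser Γ T} {a b a' b' : ℕ} (ha : a = a') (hb : b = b')
    (h : QPIso (S.ideal a') (S.ideal (a' + 1)) (S'.ideal b') (S'.ideal (b' + 1))) :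
    QPIso (S.ideal a) (S.ideal (a + 1)) (S'.ideal b) (S'.ideal (b + 1)) := by
  subst ha; subst hb; exact h

theorem sumSet_comm (I J : Set T) : sumSet I J = sumSet J I := by
  ext x
  constructor
  · rintro ⟨i, hi, j, hj, rfl⟩; exact ⟨j, hj, i, hi, add_comm i j⟩
  · rintro ⟨j, hj, i, hi, rfl⟩; exact ⟨i, hi, j, hj, add_comm j i⟩

theorem SerEquiv.norm {S S' : Ser Γ T} (h : SerEquiv S S') {n' m' : ℕ}
    (hn : S.n = n') (hm : S'.n = m') :
    ∃ σ : Fin n' ≃ Fin m', ∀ i : Fin n',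
      QPIso (S.ideal i) (S.ideal (i + 1)) (S'.ideal (σ i)) (S'.ideal ((σ i : ℕ) + 1)) := by
  obtain ⟨σ, hσ⟩ := h
  exact ⟨(finCongr hn.symm).trans (σ.trans (finCongr hm)),
    fun i => hσ (finCongr hn.symm i)⟩

/-- Jordan–Hölder for `Ser`. -/
theorem jordan_holder (hT : Refinement T) :
    ∀ k (S S' : Ser Γ T), S.n = k → S.I S.n = S'.I S'.n → SerEquiv S S' := by
  intro k
  induction k using Nat.strong_induction_on with
  | _ k ih =>
  rcases k with _ | t
  · -- base case : S.n = 0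
    intro S S' hk htop
    have htriv : S.I S.n = {0} := by rw [hk]; exact S.bot
    have hm0 : S'.n = 0 := by
      by_contra hm
      have h1 : S'.I 1 ⊆ {0} := by
        rw [← htriv, htop]; exact S'.subset_top 1
      have h2 : ({0} : Set T) ⊆ S'.I 1 := by
        rintro x rfl; exact (S'.ideal 1).1
      exact S'.strict 0 (by omega) (S'.bot.trans (Set.Subset.antisymm h2 h1))
    refine ⟨finCongr (hk.trans hm0.symm), fun i => ?_⟩
    exact absurd i.2 (by omega)
  · -- inductive step : S.n = t + 1
    intro S S' hk htop
    -- S'.n is positive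
    have hm0 : S'.n ≠ 0 := by
      intro hm
      have htriv : S.I S.n = {0} := by rw [htop, hm]; exact S'.bot
      have h1 : S.I 1 ⊆ {0} := by rw [← htriv]; exact S.subset_top 1
      have h2 : ({0} : Set T) ⊆ S.I 1 := by rintro x rfl; exact (S.ideal 1).1
      exact S.strict 0 (by omega) (S.bot.trans (Set.Subset.antisymm h2 h1))
    obtain ⟨u, hu⟩ : ∃ u, S'.n = u + 1 := ⟨S'.n - 1, by omega⟩
    have htT : t ≤ S.n := by omega
    have htU : u ≤ S'.n := by omega
    have e1 : S.I (t + 1) = S'.I (u + 1) := by rw [← hk, ← hu]; exact htop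
    have hLP : S'.I u ⊆ S.I (t + 1) := by rw [e1]; exact S'.mono u
    by_cases hKL : S.I t = S'.I u
    · -- same penultimate terms
      obtain ⟨σ0, hσ0⟩ := (ih t (by omega) (S.truncate t htT) (S'.truncate u htU) rfl
        (by rw [Ser.truncate_top, Ser.truncate_top]; exact hKL)).norm (n' := t) (m' := u) rfl rfl
      let σtot : Fin S.n ≃ Fin S'.n :=
        (finCongr hk).trans ((finSuccEquivLast (n := t)).trans ((Equiv.optionCongr σ0).trans
          ((finSuccEquivLast (n := u)).symm.trans (finCongr hu.symm))))
      refine ⟨σtot, fun i => ?_⟩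
      have hσv : σtot i = finCongr hu.symm (finSuccEquivLast.symm
          (Equiv.optionCongr σ0 (finSuccEquivLast (finCongr hk i)))) := rfl
      rcases hc1 : finSuccEquivLast (finCongr hk i) with _ | j
      · -- last index
        have hii : finCongr hk i = Fin.last t :=
          finSuccEquivLast.injective (hc1.trans finSuccEquivLast_last.symm)
        have hvi : (i : ℕ) = t := by
          have := congrArg Fin.val hii
          simpa using this
        have hvσ : ((σtot i : Fin S'.n) : ℕ) = u := by
          rw [hσv]
          simp only [hc1]
          simp
        exact QPIso.reindex hvi hvσ (QPIso.congr _ _ _ _ hKL e1)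
      · -- inner index
        have hij : finCongr hk i = Fin.castSucc j :=
          finSuccEquivLast.injective (hc1.trans (finSuccEquivLast_castSucc j).symm)
        have hvi : (i : ℕ) = (j : ℕ) := by
          have := congrArg Fin.val hij
          simpa using this
        have hvσ : ((σtot i : Fin S'.n) : ℕ) = ((σ0 j : Fin u) : ℕ) := by
          rw [hσv]
          simp only [hc1]
          simp
        exact QPIso.reindex hvi hvσ (((S.truncate_quot t htT j j.2).symm.trans (hσ0 j)).trans
          (S'.truncate_quot u htU _ (σ0 j).2))
    · -- different penultimate terms
      have noKsub : ¬ S'.I u ⊆ S.I t := by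
        intro hs
        rcases correspondence (S'.ideal u) (S'.ideal (u + 1)) (S'.simple u (by omega))
            (S.ideal t) hs ((S.mono t).trans e1.subset) with h | h
        · exact hKL h
        · exact S.strict t (by omega) (h.trans e1.symm)
      have noLsub : ¬ S.I t ⊆ S'.I u := by
        intro hs
        rcases correspondence (S.ideal t) (S.ideal (t + 1)) (S.simple t (by omega))
            (S'.ideal u) hs hLP with h | h
        · exact hKL h.symm
        · exact S'.strict u (by omega) (h.trans e1)
      -- the sum is the top
      have hsumKL : sumSet (S.I t) (S'.I u) = S.I (t + 1) := by
        rcases correspondence (S.ideal t) (S.ideal (t + 1)) (S.simple t (by omega))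
            (sumSet_isOrdIdeal hT (S.ideal t) (S'.ideal u))
            (left_subset_sumSet (S'.ideal u))
            (sumSet_subset (S.ideal (t + 1)) (S.mono t) hLP) with h | h
        · exact absurd ((right_subset_sumSet (S.ideal t)).trans h.subset) noKsub
        · exact h
      have hsumLK : sumSet (S'.I u) (S.I t) = S'.I (u + 1) := by
        rw [sumSet_comm, hsumKL, e1]
      -- the intersection M
      have hM : IsOrdIdeal Γ (S.I t ∩ S'.I u) := inter_isOrdIdeal (S.ideal t) (S'.ideal u)
      have hMK : S.I t ∩ S'.I u ≠ S.I t := by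
        intro h
        refine noLsub (fun x hx => ?_)
        rw [← h] at hx
        exact hx.2
      have hML : S.I t ∩ S'.I u ≠ S'.I u := by
        intro h
        refine noKsub (fun x hx => ?_)
        rw [← h] at hx
        exact hx.1
      -- a composition series for M
      obtain ⟨R, hR⟩ := exists_ser_of_subset hT t (S.truncate t htT) rfl
        (S.I t ∩ S'.I u) hM (by rw [S.truncate_top]; exact Set.inter_subset_left)
      -- the two glued chains
      have chainA : QPIso (R.ideal R.n) (S.ideal t) (S'.ideal u) (S'.ideal (u + 1)) :=
        (QPIso.congr (R.ideal R.n) (S.ideal t) hM (S.ideal t) hR rfl).trans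
          ((QPIso.of_rel hM (S'.ideal u) (S.ideal t)
              (fun x hx => ⟨fun h => h.2, fun h => ⟨hx, h⟩⟩)).trans
            ((second_iso hT (S'.ideal u) (S.ideal t)).trans
              (QPIso.congr _ _ _ _ rfl hsumLK)))
      have chainB : QPIso (R.ideal R.n) (S'.ideal u) (S.ideal t) (S.ideal (t + 1)) :=
        (QPIso.congr (R.ideal R.n) (S'.ideal u) hM (S'.ideal u) hR rfl).trans
          ((QPIso.of_rel hM (S.ideal t) (S'.ideal u)
              (fun x hx => ⟨fun h => h.1, fun h => ⟨h, hx⟩⟩)).trans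
            ((second_iso hT (S.ideal t) (S'.ideal u)).trans
              (QPIso.congr _ _ _ _ rfl hsumKL)))
      have hsimA : @IsSimple Γ (QuotPair (R.ideal R.n) (S.ideal t)) _ _
          (quotPairAction (R.ideal R.n) (S.ideal t)) :=
        gammaIso_simple (QPIso.symm chainA) (S'.simple u (by omega))
      have hsimB : @IsSimple Γ (QuotPair (R.ideal R.n) (S'.ideal u)) _ _
          (quotPairAction (R.ideal R.n) (S'.ideal u)) :=
        gammaIso_simple (QPIso.symm chainB) (S.simple t (by omega))
      set A := R.snoc (S.I t) (S.ideal t)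
        (by rw [hR]; exact Set.inter_subset_left) (by rw [hR]; exact hMK) hsimA with hA
      set B := R.snoc (S'.I u) (S'.ideal u)
        (by rw [hR]; exact Set.inter_subset_right) (by rw [hR]; exact hML) hsimB with hB
      obtain ⟨σ1, hσ1⟩ := (ih t (by omega) (S.truncate t htT) A rfl
        (by rw [Ser.truncate_top, Ser.snoc_top])).norm (n' := t) (m' := R.n + 1) rfl rfl
      have hta : t = R.n + 1 := Fin.equiv_iff_eq.mp ⟨σ1⟩
      obtain ⟨σ2, hσ2⟩ := (ih (R.n + 1) (by omega) B (S'.truncate u htU) rfl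
        (by rw [Ser.snoc_top, Ser.truncate_top])).norm (n' := R.n + 1) (m' := u) rfl rfl
      -- assemble the bijection
      let e1' : Fin t ≃ Option (Fin R.n) := σ1.trans (finSuccEquivLast (n := R.n))
      let e2' : Option (Fin R.n) ≃ Fin u := (finSuccEquivLast (n := R.n)).symm.trans σ2
      let σtot : Fin S.n ≃ Fin S'.n :=
        (finCongr hk).trans ((finSuccEquivLast (n := t)).trans ((Equiv.optionCongr e1').trans
          ((Equiv.swap none (some none)).trans ((Equiv.optionCongr e2').trans
            ((finSuccEquivLast (n := u)).symm.trans (finCongr hu.symm))))))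
      refine ⟨σtot, fun i => ?_⟩
      have hσv : σtot i = finCongr hu.symm (finSuccEquivLast.symm
          (Equiv.optionCongr e2' ((Equiv.swap none (some none))
            (Equiv.optionCongr e1' (finSuccEquivLast (finCongr hk i)))))) := rfl
      rcases hc1 : finSuccEquivLast (finCongr hk i) with _ | j
      · -- i is the last index of S
        have hii : finCongr hk i = Fin.last t :=
          finSuccEquivLast.injective (hc1.trans finSuccEquivLast_last.symm)
        have hvi : (i : ℕ) = t := by
          have := congrArg Fin.val hii; simpa using this
        have hvσ : ((σtot i : Fin S'.n) : ℕ) = ((σ2 (Fin.last R.n) : Fin u) : ℕ) := by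
          rw [hσv]
          simp only [hc1]
          simp [e2', Equiv.swap_apply_left]
          rw [← Equiv.optionCongr_symm, Equiv.optionCongr_apply, Option.map_some, finSuccEquivLast_symm_none,
            Option.map_some, finSuccEquivLast_symm_some]
          rfl
        refine QPIso.reindex hvi hvσ ?_
        exact (QPIso.symm chainB).trans
          (((R.snoc_quot_last (S'.I u) (S'.ideal u) _ _ hsimB).symm.trans
            (hσ2 (Fin.last R.n))).trans
              (S'.truncate_quot u htU _ (σ2 (Fin.last R.n)).2))
      · have hij : finCongr hk i = Fin.castSucc j :=
          finSuccEquivLast.injective (hc1.trans (finSuccEquivLast_castSucc j).symm)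
        have hvi : (i : ℕ) = (j : ℕ) := by
          have := congrArg Fin.val hij; simpa using this
        rcases hc2 : finSuccEquivLast (σ1 j) with _ | j2
        · -- σ1 j is the last index of A
          have hjl : σ1 j = Fin.last R.n :=
            finSuccEquivLast.injective (hc2.trans finSuccEquivLast_last.symm)
          have hvσ : ((σtot i : Fin S'.n) : ℕ) = u := by
            rw [hσv]
            simp only [hc1]
            simp [e1', hc2, Equiv.swap_apply_right]
          refine QPIso.reindex hvi hvσ ?_
          have h1 := hσ1 j
          rw [show ((σ1 j : Fin A.n) : ℕ) = R.n from by rw [hjl]; simp] at h1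
          exact ((S.truncate_quot t htT j j.2).symm.trans h1).trans
            ((R.snoc_quot_last (S.I t) (S.ideal t) _ _ hsimA).trans chainA)
        · -- inner index
          have hjc : σ1 j = Fin.castSucc j2 :=
            finSuccEquivLast.injective (hc2.trans (finSuccEquivLast_castSucc j2).symm)
          have hvσ : ((σtot i : Fin S'.n) : ℕ) = ((σ2 (Fin.castSucc j2) : Fin u) : ℕ) := by
            rw [hσv]
            simp only [hc1]
            simp only [Equiv.optionCongr_apply, Option.map_some]
            rw [show e1' j = some j2 from hc2]
            rw [Equiv.swap_apply_of_ne_of_ne (by simp) (by simp)]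
            simp [e2']
          refine QPIso.reindex hvi hvσ ?_
          have h1 := hσ1 j
          rw [show ((σ1 j : Fin A.n) : ℕ) = (j2 : ℕ) from by rw [hjc]; simp] at h1
          exact ((S.truncate_quot t htT j j.2).symm.trans h1).trans
            (((R.snoc_quot_lt (S.I t) (S.ideal t) _ _ hsimA j2 j2.2).trans
              ((R.snoc_quot_lt (S'.I u) (S'.ideal u) _ _ hsimB j2 j2.2).symm.trans
                (hσ2 (Fin.castSucc j2)))).trans
              (S'.truncate_quot u htU _ (σ2 (Fin.castSucc j2)).2))

end JH
namespace JH

variable {Γ : Type*} {T : Type*} [AddCommMonoid T] [CommGroup Γ] [DistribMulAction Γ T]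

theorem univ_isOrdIdeal : IsOrdIdeal Γ (Set.univ : Set T) :=
  ⟨trivial, fun _ _ _ _ => by simp⟩

/-- Converting a `CompSeries` into a `Ser`. -/
def CompSeries.toSer (S : CompSeries Γ T) : Ser Γ T where
  n := S.n
  I i := if i ≤ S.n then S.I i else Set.univ
  ideal i := by beta_reduce; split_ifs with h; exacts [S.ideal i h, univ_isOrdIdeal]
  bot := by beta_reduce; rw [if_pos (Nat.zero_le S.n)]; exact S.bot
  const i hi := by
    beta_reduce
    rw [if_pos le_rfl]
    rcases eq_or_lt_of_le hi with h | h
    · rw [← h, if_pos le_rfl]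
    · rw [if_neg (by omega), S.top]
  mono i := by
    beta_reduce
    by_cases h1 : i + 1 ≤ S.n
    · rw [if_pos (by omega : i ≤ S.n), if_pos h1]
      exact (S.strict i (by omega)).subset
    · rw [if_neg h1]
      exact Set.subset_univ _
  strict i hi := by
    beta_reduce
    rw [if_pos hi.le, if_pos (by omega : i + 1 ≤ S.n)]
    exact (S.strict i hi).ne
  simple i hi := by
    refine simple_congr ?_ ?_ (S.simple i hi)
    · beta_reduce; rw [if_pos hi.le]
    · beta_reduce; rw [if_pos (by omega : i + 1 ≤ S.n)]

theorem CompSeries.toSer_quot (S : CompSeries Γ T) (i : ℕ) (hi : i < S.n) :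
    QPIso (S.ideal i hi.le) (S.ideal (i + 1) hi)
      (S.toSer.ideal i) (S.toSer.ideal (i + 1)) := by
  refine QPIso.congr _ _ _ _ ?_ ?_
  · show S.I i = if i ≤ S.n then S.I i else Set.univ
    rw [if_pos hi.le]
  · show S.I (i + 1) = if i + 1 ≤ S.n then S.I (i + 1) else Set.univ
    rw [if_pos (by omega : i + 1 ≤ S.n)]

theorem CompSeries.toSer_top (S : CompSeries Γ T) : S.toSer.I S.toSer.n = Set.univ := by
  show (if S.n ≤ S.n then S.I S.n else Set.univ) = Set.univ
  rw [if_pos le_rfl]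
  exact S.top

end JH
open JH in
/-- Jordan–Hölder: any two Γ-composition series of a commutative
refinement Γ-monoid are equivalent: there is a bijection between the simple
quotients making corresponding quotients Γ-isomorphic. -/
theorem stmt15 {Γ T : Type*} [CommGroup Γ] [AddCommMonoid T] [DistribMulAction Γ T]
    (hT : Refinement T) (S₁ S₂ : CompSeries Γ T) :
    ∃ σ : Fin S₁.n ≃ Fin S₂.n, ∀ i : Fin S₁.n,
      @IsGammaIso Γ
        (QuotPair (S₁.ideal ↑i i.2.le) (S₁.ideal (↑i + 1) i.2))
        (QuotPair (S₂.ideal ↑(σ i) (σ i).2.le) (S₂.ideal (↑(σ i) + 1) (σ i).2))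
        _ _ _
        (quotPairAction (S₁.ideal ↑i i.2.le) (S₁.ideal (↑i + 1) i.2))
        (quotPairAction (S₂.ideal ↑(σ i) (σ i).2.le) (S₂.ideal (↑(σ i) + 1) (σ i).2))
    := by
  obtain ⟨σ, hσ⟩ := (jordan_holder hT S₁.toSer.n S₁.toSer S₂.toSer rfl
    (S₁.toSer_top.trans S₂.toSer_top.symm)).norm (n' := S₁.n) (m' := S₂.n) rfl rfl
  refine ⟨σ, fun i => ?_⟩
  exact ((S₁.toSer_quot i i.2).trans (hσ i)).trans ((S₂.toSer_quot (σ i) (σ i).2).symm)
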